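/- For every (u1,…,u7) ∈ ℝ^7: the vectors Z1,…,Z7 are linearly independent (so dim W = 7); the radical W ∩ W⊥ equals span{Z1, Z2}; JZ1 = Z3 ∈ W and JZ5 = Z6 ∈ W; and JZ2 and JZ7 lie in W⊥ but not in W. (This verifies that the submanifold of Example 1 is a 2-lightlike submanifold carrying a proper STCR structure.) -/

import Mathlib

set_option maxHeartbeats 1600000
noncomputable section

/-- The semi-Euclidean metric of index 4 on `ℝ¹²`:
`ḡ(x,y) = −x₁y₁ − x₂y₂ − x₃y₃ − x₄y₄ + Σ_{i=5}^{12} xᵢyᵢ`. -/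
def gbar : LinearMap.BilinForm ℝ (Fin 12 → ℝ) :=
  LinearMap.mk₂ ℝ
    (fun x y => -(x 0 * y 0) - x 1 * y 1 - x 2 * y 2 - x 3 * y 3
      + x 4 * y 4 + x 5 * y 5 + x 6 * y 6 + x 7 * y 7
      + x 8 * y 8 + x 9 * y 9 + x 10 * y 10 + x 11 * y 11)
    (fun _ _ _ => by simp only [Pi.add_apply]; ring)
    (fun _ _ _ => by simp only [Pi.smul_apply, smul_eq_mul]; ring)
    (fun _ _ _ => by simp only [Pi.add_apply]; ring)
    (fun _ _ _ => by simp only [Pi.smul_apply, smul_eq_mul]; ring)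

/-- The standard complex structure on `ℝ¹²`:
`J(x₁,x₂,…,x₁₁,x₁₂) = (−x₂,x₁,…,−x₁₂,x₁₁)`. -/
def Jmap (x : Fin 12 → ℝ) : Fin 12 → ℝ :=
  ![-(x 1), x 0, -(x 3), x 2, -(x 5), x 4, -(x 7), x 6, -(x 9), x 8, -(x 11), x 10]

/-- The parametrization of the submanifold of Example 1. -/
def Φ (u : Fin 7 → ℝ) : Fin 12 → ℝ :=
  ![Real.sin (u 1), -Real.cos (u 1), u 0, u 2 - u 3 / 2, u 1, 0, u 0, u 2 + u 3 / 2,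
    u 4 + u 6, u 5 - u 6, u 4 - u 6, u 5 + u 6]

/-- The coordinate tangent vectors `Z_i = ∂Φ/∂u_i`. -/
def Z (u : Fin 7 → ℝ) (i : Fin 7) : Fin 12 → ℝ :=
  fderiv ℝ Φ u (Pi.single i 1)

/-! ### Auxiliary material -/

abbrev pr (i : Fin 7) : (Fin 7 → ℝ) →L[ℝ] ℝ := ContinuousLinearMap.proj i

/-- The total derivative of `Φ` as an explicit continuous linear map. -/
def L (u : Fin 7 → ℝ) : (Fin 7 → ℝ) →L[ℝ] (Fin 12 → ℝ) :=
  ContinuousLinearMap.pi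
    ![Real.cos (u 1) • pr 1, -(-Real.sin (u 1) • pr 1), pr 0,
      pr 2 - (2:ℝ)⁻¹ • pr 3, pr 1, 0, pr 0, pr 2 + (2:ℝ)⁻¹ • pr 3,
      pr 4 + pr 6, pr 5 - pr 6, pr 4 - pr 6, pr 5 + pr 6]

lemma hasL (u : Fin 7 → ℝ) : HasFDerivAt Φ (L u) u := by
  apply hasFDerivAt_pi''
  intro i
  have h1 : HasFDerivAt (fun x : Fin 7 → ℝ => x 1) (pr 1) u := hasFDerivAt_apply 1 u
  fin_cases i
  · exact h1.sin
  · exact h1.cos.neg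
  · exact hasFDerivAt_apply 0 u
  · show HasFDerivAt (fun x : Fin 7 → ℝ => x 2 - x 3 / 2) (pr 2 - (2:ℝ)⁻¹ • pr 3) u
    simp only [div_eq_mul_inv]
    exact (hasFDerivAt_apply 2 u).sub ((hasFDerivAt_apply 3 u).mul_const _)
  · exact hasFDerivAt_apply 1 u
  · exact hasFDerivAt_const 0 u
  · exact hasFDerivAt_apply 0 u
  · show HasFDerivAt (fun x : Fin 7 → ℝ => x 2 + x 3 / 2) (pr 2 + (2:ℝ)⁻¹ • pr 3) u
    simp only [div_eq_mul_inv]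
    exact (hasFDerivAt_apply 2 u).add ((hasFDerivAt_apply 3 u).mul_const _)
  · exact (hasFDerivAt_apply 4 u).add (hasFDerivAt_apply 6 u)
  · exact (hasFDerivAt_apply 5 u).sub (hasFDerivAt_apply 6 u)
  · exact (hasFDerivAt_apply 4 u).sub (hasFDerivAt_apply 6 u)
  · exact (hasFDerivAt_apply 5 u).add (hasFDerivAt_apply 6 u)

lemma hZ (u : Fin 7 → ℝ) (i : Fin 7) : Z u i = L u (Pi.single i 1) := by
  rw [Z, (hasL u).fderiv]

/-- Component lemmas for `L`. -/
lemma L0 (u v : Fin 7 → ℝ) : L u v 0 = Real.cos (u 1) * v 1 := rfl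
lemma L1 (u v : Fin 7 → ℝ) : L u v 1 = -(-Real.sin (u 1) * v 1) := rfl
lemma L2 (u v : Fin 7 → ℝ) : L u v 2 = v 0 := rfl
lemma L3 (u v : Fin 7 → ℝ) : L u v 3 = v 2 - 2⁻¹ * v 3 := rfl
lemma L4 (u v : Fin 7 → ℝ) : L u v 4 = v 1 := rfl
lemma L5 (u v : Fin 7 → ℝ) : L u v 5 = 0 := rfl
lemma L6 (u v : Fin 7 → ℝ) : L u v 6 = v 0 := rfl
lemma L7 (u v : Fin 7 → ℝ) : L u v 7 = v 2 + 2⁻¹ * v 3 := rfl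
lemma L8 (u v : Fin 7 → ℝ) : L u v 8 = v 4 + v 6 := rfl
lemma L9 (u v : Fin 7 → ℝ) : L u v 9 = v 5 - v 6 := rfl
lemma L10 (u v : Fin 7 → ℝ) : L u v 10 = v 4 - v 6 := rfl
lemma L11 (u v : Fin 7 → ℝ) : L u v 11 = v 5 + v 6 := rfl

/-- Component lemmas for `Jmap`. -/
lemma Jm0 (x : Fin 12 → ℝ) : Jmap x 0 = -(x 1) := rfl
lemma Jm1 (x : Fin 12 → ℝ) : Jmap x 1 = x 0 := rfl
lemma Jm2 (x : Fin 12 → ℝ) : Jmap x 2 = -(x 3) := rfl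
lemma Jm3 (x : Fin 12 → ℝ) : Jmap x 3 = x 2 := rfl
lemma Jm4 (x : Fin 12 → ℝ) : Jmap x 4 = -(x 5) := rfl
lemma Jm5 (x : Fin 12 → ℝ) : Jmap x 5 = x 4 := rfl
lemma Jm6 (x : Fin 12 → ℝ) : Jmap x 6 = -(x 7) := rfl
lemma Jm7 (x : Fin 12 → ℝ) : Jmap x 7 = x 6 := rfl
lemma Jm8 (x : Fin 12 → ℝ) : Jmap x 8 = -(x 9) := rfl
lemma Jm9 (x : Fin 12 → ℝ) : Jmap x 9 = x 8 := rfl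
lemma Jm10 (x : Fin 12 → ℝ) : Jmap x 10 = -(x 11) := rfl
lemma Jm11 (x : Fin 12 → ℝ) : Jmap x 11 = x 10 := rfl

/-- Standard basis vectors of `ℝ¹²`. -/
def e (k : Fin 12) : Fin 12 → ℝ := Pi.single k 1

lemma Zval0 (u : Fin 7 → ℝ) : Z u 0 = e 2 + e 6 := by
  rw [hZ]; funext j; fin_cases j <;>
    simp [L0, L1, L2, L3, L4, L5, L6, L7, L8, L9, L10, L11, e, Pi.single_apply]

lemma Zval1 (u : Fin 7 → ℝ) :
    Z u 1 = Real.cos (u 1) • e 0 + Real.sin (u 1) • e 1 + e 4 := by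
  rw [hZ]; funext j; fin_cases j <;>
    simp [L0, L1, L2, L3, L4, L5, L6, L7, L8, L9, L10, L11, e, Pi.single_apply]

lemma Zval2 (u : Fin 7 → ℝ) : Z u 2 = e 3 + e 7 := by
  rw [hZ]; funext j; fin_cases j <;>
    simp [L0, L1, L2, L3, L4, L5, L6, L7, L8, L9, L10, L11, e, Pi.single_apply]

lemma Zval3 (u : Fin 7 → ℝ) : Z u 3 = -(2:ℝ)⁻¹ • e 3 + (2:ℝ)⁻¹ • e 7 := by
  rw [hZ]; funext j; fin_cases j <;>
    simp [L0, L1, L2, L3, L4, L5, L6, L7, L8, L9, L10, L11, e, Pi.single_apply]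

lemma Zval4 (u : Fin 7 → ℝ) : Z u 4 = e 8 + e 10 := by
  rw [hZ]; funext j; fin_cases j <;>
    simp [L0, L1, L2, L3, L4, L5, L6, L7, L8, L9, L10, L11, e, Pi.single_apply]

lemma Zval5 (u : Fin 7 → ℝ) : Z u 5 = e 9 + e 11 := by
  rw [hZ]; funext j; fin_cases j <;>
    simp [L0, L1, L2, L3, L4, L5, L6, L7, L8, L9, L10, L11, e, Pi.single_apply]

lemma Zval6 (u : Fin 7 → ℝ) : Z u 6 = e 8 - e 9 - e 10 + e 11 := by
  rw [hZ]; funext j; fin_cases j <;>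
    simp [L0, L1, L2, L3, L4, L5, L6, L7, L8, L9, L10, L11, e, Pi.single_apply]

lemma mem_orth (u : Fin 7 → ℝ) (y : Fin 12 → ℝ)
    (h : ∀ k, gbar (Z u k) y = 0) :
    y ∈ LinearMap.BilinForm.orthogonal gbar (Submodule.span ℝ (Set.range (Z u))) := by
  rw [LinearMap.BilinForm.mem_orthogonal_iff]
  intro n hn
  refine Submodule.span_induction ?_ ?_ ?_ ?_ hn
  · rintro x ⟨k, rfl⟩; exact h k
  · simp [LinearMap.BilinForm.IsOrtho]
  · intro x z _ _ hx hz
    simp only [LinearMap.BilinForm.IsOrtho, map_add, LinearMap.add_apply] at *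
    rw [hx, hz, add_zero]
  · intro a x _ hx
    simp only [LinearMap.BilinForm.IsOrtho, map_smul, LinearMap.smul_apply, smul_eq_mul] at *
    rw [hx, mul_zero]

theorem example1_is_proper_STCR (u : Fin 7 → ℝ) :
    LinearIndependent ℝ (Z u) ∧
    Module.finrank ℝ (Submodule.span ℝ (Set.range (Z u))) = 7 ∧
    Submodule.span ℝ (Set.range (Z u)) ⊓
        LinearMap.BilinForm.orthogonal gbar (Submodule.span ℝ (Set.range (Z u)))
      = Submodule.span ℝ {Z u 0, Z u 1} ∧
    Jmap (Z u 0) = Z u 2 ∧ Z u 2 ∈ Submodule.span ℝ (Set.range (Z u)) ∧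
    Jmap (Z u 4) = Z u 5 ∧ Z u 5 ∈ Submodule.span ℝ (Set.range (Z u)) ∧
    Jmap (Z u 1) ∈ LinearMap.BilinForm.orthogonal gbar (Submodule.span ℝ (Set.range (Z u))) ∧
    Jmap (Z u 1) ∉ Submodule.span ℝ (Set.range (Z u)) ∧
    Jmap (Z u 6) ∈ LinearMap.BilinForm.orthogonal gbar (Submodule.span ℝ (Set.range (Z u))) ∧
    Jmap (Z u 6) ∉ Submodule.span ℝ (Set.range (Z u)) := by
  have pyth := Real.sin_sq_add_cos_sq (u 1)
  -- linear independence
  have hli : LinearIndependent ℝ (Z u) := by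
    rw [Fintype.linearIndependent_iff]
    intro g hg
    have h2 := congrFun hg 2
    have h4 := congrFun hg 4
    have h3 := congrFun hg 3
    have h7 := congrFun hg 7
    have h8 := congrFun hg 8
    have h10 := congrFun hg 10
    have h9 := congrFun hg 9
    simp [Fin.sum_univ_seven, Pi.add_apply, Pi.smul_apply, smul_eq_mul, Pi.zero_apply,
      Zval0, Zval1, Zval2, Zval3, Zval4, Zval5, Zval6, e, Pi.sub_apply,
      Pi.single_apply] at h2 h4 h3 h7 h8 h10 h9
    try norm_num at h2 h4 h3 h7 h8 h10 h9
    intro i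
    fin_cases i <;> simp <;> linarith
  refine ⟨hli, ?_, ?_, ?_, ?_, ?_, ?_, ?_, ?_, ?_, ?_⟩
  · rw [finrank_span_eq_card hli]; simp
  · -- radical
    apply le_antisymm
    · rintro x ⟨hxW, hxO⟩
      rw [SetLike.mem_coe, Submodule.mem_span_range_iff_exists_fun] at hxW
      obtain ⟨g, rfl⟩ := hxW
      rw [SetLike.mem_coe, LinearMap.BilinForm.mem_orthogonal_iff] at hxO
      have hk : ∀ k : Fin 7, gbar (Z u k) (∑ i, g i • Z u i) = 0 := fun k =>
        hxO _ (Submodule.subset_span ⟨k, rfl⟩)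
      have e2 := hk 2
      have e3 := hk 3
      have e4 := hk 4
      have e5 := hk 5
      have e6 := hk 6
      simp [gbar, LinearMap.mk₂_apply, Fin.sum_univ_seven, Pi.add_apply, Pi.smul_apply,
        smul_eq_mul, Zval0, Zval1, Zval2, Zval3, Zval4, Zval5, Zval6, e, Pi.sub_apply,
        Pi.single_apply] at e2 e3 e4 e5 e6
      try norm_num at e2 e3 e4 e5 e6
      have hg3 : g 3 = 0 := by linarith
      have hg2 : g 2 = 0 := by linarith
      have hg4 : g 4 = 0 := by linarith
      have hg5 : g 5 = 0 := by linarith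
      have hg6 : g 6 = 0 := by linarith
      rw [Submodule.mem_span_pair]
      refine ⟨g 0, g 1, ?_⟩
      rw [Fin.sum_univ_seven, hg2, hg3, hg4, hg5, hg6]
      simp
    · rw [Submodule.span_le, Set.insert_subset_iff, Set.singleton_subset_iff]
      constructor
      · exact ⟨Submodule.subset_span ⟨0, rfl⟩, mem_orth u _ (by
          intro k; fin_cases k <;>
            simp [gbar, LinearMap.mk₂_apply, Zval0, Zval1, Zval2, Zval3, Zval4, Zval5,
              Zval6, e, Pi.add_apply, Pi.sub_apply, Pi.smul_apply, smul_eq_mul,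
              Pi.single_apply] <;> try norm_num)⟩
      · exact ⟨Submodule.subset_span ⟨1, rfl⟩, mem_orth u _ (by
          intro k; fin_cases k <;>
            simp [gbar, LinearMap.mk₂_apply, Zval0, Zval1, Zval2, Zval3, Zval4, Zval5,
              Zval6, e, Pi.add_apply, Pi.sub_apply, Pi.smul_apply, smul_eq_mul,
              Pi.single_apply] <;> try norm_num <;> try nlinarith [pyth])⟩
  · -- J Z0 = Z2
    funext j; fin_cases j <;>
      simp [Jm0, Jm1, Jm2, Jm3, Jm4, Jm5, Jm6, Jm7, Jm8, Jm9, Jm10, Jm11,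
        Zval0, Zval2, e, Pi.single_apply]
  · exact Submodule.subset_span ⟨2, rfl⟩
  · -- J Z4 = Z5
    funext j; fin_cases j <;>
      simp [Jm0, Jm1, Jm2, Jm3, Jm4, Jm5, Jm6, Jm7, Jm8, Jm9, Jm10, Jm11,
        Zval4, Zval5, e, Pi.single_apply]
  · exact Submodule.subset_span ⟨5, rfl⟩
  · -- J Z1 ∈ W⊥
    refine mem_orth u _ ?_
    intro k; fin_cases k <;>
      simp [gbar, LinearMap.mk₂_apply, Jm0, Jm1, Jm2, Jm3, Jm4, Jm5, Jm6, Jm7, Jm8,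
        Jm9, Jm10, Jm11, Zval0, Zval1, Zval2, Zval3, Zval4, Zval5, Zval6, e, Pi.add_apply,
        Pi.sub_apply, Pi.smul_apply, smul_eq_mul, Pi.single_apply] <;> try norm_num <;> try ring
  · -- J Z1 ∉ W
    intro h
    rw [Submodule.mem_span_range_iff_exists_fun] at h
    obtain ⟨g, hg⟩ := h
    have h5 := congrFun hg 5
    simp [Fin.sum_univ_seven, Pi.add_apply, Pi.smul_apply, smul_eq_mul, Jm5,
      Zval0, Zval1, Zval2, Zval3, Zval4, Zval5, Zval6, e, Pi.sub_apply,
      Pi.single_apply] at h5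
    try norm_num at h5
  · -- J Z6 ∈ W⊥
    refine mem_orth u _ ?_
    intro k; fin_cases k <;>
      simp [gbar, LinearMap.mk₂_apply, Jm0, Jm1, Jm2, Jm3, Jm4, Jm5, Jm6, Jm7, Jm8,
        Jm9, Jm10, Jm11, Zval0, Zval1, Zval2, Zval3, Zval4, Zval5, Zval6, e, Pi.add_apply,
        Pi.sub_apply, Pi.smul_apply, smul_eq_mul, Pi.single_apply] <;> try norm_num <;> try ring
  · -- J Z6 ∉ W
    intro h
    rw [Submodule.mem_span_range_iff_exists_fun] at h
    obtain ⟨g, hg⟩ := h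
    have h8 := congrFun hg 8
    have h9 := congrFun hg 9
    have h10 := congrFun hg 10
    have h11 := congrFun hg 11
    simp [Fin.sum_univ_seven, Pi.add_apply, Pi.smul_apply, smul_eq_mul, Jm8, Jm9,
      Jm10, Jm11, Zval0, Zval1, Zval2, Zval3, Zval4, Zval5, Zval6, e, Pi.sub_apply,
      Pi.single_apply] at h8 h9 h10 h11
    try norm_num at h8 h9 h10 h11
    linarith
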